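/- The quaternion algebra ℍ over ℝ, with grading ℍ^{(0,0,0)} = ℝ·1, ℍ^{(0,1,1)} = ℝ·i, ℍ^{(1,0,1)} = ℝ·j, ℍ^{(1,1,0)} = ℝ·k (all other components zero), is a ((ℤ/2)³, λ)-commutative algebra for the commutation factor λ(x,y) = (−1)^{x₁y₁+x₂y₂+x₃y₃}. That is, for homogeneous quaternions a, b of degrees ã, b̃, one has ab = λ(ã,b̃) ba. -/

import Mathlib

open Quaternion

/-- Degree of i in (ℤ/2)³. -/
def degI : Fin 3 → ZMod 2 := ![0, 1, 1]
/-- Degree of j in (ℤ/2)³. -/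
def degJ : Fin 3 → ZMod 2 := ![1, 0, 1]
/-- Degree of k in (ℤ/2)³. -/
def degK : Fin 3 → ZMod 2 := ![1, 1, 0]

/-- The commutation factor λ(x,y) = (−1)^{x₁y₁+x₂y₂+x₃y₃} on (ℤ/2)³, valued in ℝ. -/
def lamH (x y : Fin 3 → ZMod 2) : ℝ :=
  (-1) ^ (x 0 * y 0 + x 1 * y 1 + x 2 * y 2).val

/-- `qHomog γ a` : a is a homogeneous quaternion of degree γ for the grading
ℍ⁰ = ℝ·1, ℍ^ĩ = ℝ·i, ℍ^j̃ = ℝ·j, ℍ^k̃ = ℝ·k (other components zero). -/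
def qHomog (γ : Fin 3 → ZMod 2) (a : ℍ[ℝ]) : Prop :=
  (γ = 0 ∧ ∃ r : ℝ, a = ⟨r, 0, 0, 0⟩) ∨
  (γ = degI ∧ ∃ r : ℝ, a = ⟨0, r, 0, 0⟩) ∨
  (γ = degJ ∧ ∃ r : ℝ, a = ⟨0, 0, r, 0⟩) ∨
  (γ = degK ∧ ∃ r : ℝ, a = ⟨0, 0, 0, r⟩)

theorem qmk_eq (a₁ a₂ a₃ a₄ : ℝ) :
    (⟨a₁, a₂, a₃, a₄⟩ : ℍ[ℝ]) = (Quaternion.equivProd ℝ).symm (a₁, a₂, a₃, a₄) := rfl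

/-- The quaternion algebra ℍ over ℝ, graded by (ℤ/2)³ with
deg i = (0,1,1), deg j = (1,0,1), deg k = (1,1,0), is ((ℤ/2)³,λ)-commutative
for λ(x,y) = (−1)^{x₁y₁+x₂y₂+x₃y₃}: for homogeneous quaternions a, b of
degrees ã, b̃ one has ab = λ(ã,b̃)·ba. -/
theorem quaternion_graded_commutative
    (x y : Fin 3 → ZMod 2) (a b : ℍ[ℝ])
    (ha : qHomog x a) (hb : qHomog y b) :
    a * b = lamH x y • (b * a) := by

  rcases ha with ⟨hx, r, rfl⟩ | ⟨hx, r, rfl⟩ | ⟨hx, r, rfl⟩ | ⟨hx, r, rfl⟩ <;>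
    rcases hb with ⟨hy, s, rfl⟩ | ⟨hy, s, rfl⟩ | ⟨hy, s, rfl⟩ | ⟨hy, s, rfl⟩ <;>
    subst hx <;> subst hy <;>
    simp only [lamH, degI, degJ, degK] <;>
    norm_num [Matrix.cons_val_zero, Matrix.cons_val_one, Matrix.head_cons] <;>
    rw [qmk_eq, qmk_eq] <;>
    ext <;>
    simp [Quaternion.re_mul, Quaternion.imI_mul, Quaternion.imJ_mul, Quaternion.imK_mul, QuaternionAlgebra.smul_mk] <;>
    norm_num [show ((2:ZMod 2)).val = 0 from rfl, show ((1:ZMod 2)).val = 1 from rfl] <;> ring
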